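/- Let (Γ, 𝒢, π) be a probability space, θ : Γ → Γ a measure-preserving map, and g ∈ L²(Γ, π) bounded from below. Define ρ(m) = ∫_Γ g(ω) g(θ^m ω) dπ(ω) − ( ∫_Γ g dπ )² for m ∈ ℕ₀ and assume Σ_{m=0}^∞ |ρ(m)| < ∞ (summable decay of correlations). Let p ∈ (1/2, 1] and let (τ̂_n)_{n≥1} be the p-EMA of the observations τ̃_n = g(θ^{n−1} ω₀), i.e. τ̂_1 = τ̃_1 and τ̂_{n+1} = (1 − (n+1)^{−p}) τ̂_n + (n+1)^{−p} τ̃_{n+1}. Then for π-almost every ω₀ ∈ Γ, τ̂_n → ∫_Γ g dπ as n → ∞. -/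

import Mathlib

open Filter MeasureTheory Topology

section Det

open Finset

private lemma det_lemma' (A : ℕ → ℝ) (hA0 : ∀ n, 0 ≤ A n) (hA1 : ∀ n, 1 ≤ n → A n ≤ 1)
    (x y : ℕ → ℝ) (M : ℝ) (hM : 0 ≤ M) (hy : ∀ n, -M ≤ y n)
    (hrec : ∀ n, 1 ≤ n → x (n + 1) = (1 - A (n + 1)) * x n + A (n + 1) * y (n + 1))
    (hsub : Tendsto (fun k => x ((k + 1) ^ 2)) atTop (𝓝 0))
    (hδ : Tendsto (fun k => ∑ j ∈ Finset.Ioc ((k + 1) ^ 2) ((k + 2) ^ 2), A j) atTop (𝓝 0)) :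
    Tendsto x atTop (𝓝 0) := by
  set δ : ℕ → ℝ := fun k => ∑ j ∈ Finset.Ioc ((k + 1) ^ 2) ((k + 2) ^ 2), A j with hδdef
  have hδ0 : ∀ k, 0 ≤ δ k := fun k => Finset.sum_nonneg fun j _ => hA0 j
  have hone : ∀ k : ℕ, 1 ≤ (k + 1) ^ 2 := fun k => Nat.one_le_pow _ _ (by omega)
  have fwd : ∀ n₀, 1 ≤ n₀ → 0 ≤ x n₀ → ∀ m, n₀ ≤ m →
      x n₀ * (1 - ∑ j ∈ Finset.Ioc n₀ m, A j) - M * (∑ j ∈ Finset.Ioc n₀ m, A j) ≤ x m := by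
    intro n₀ hn₀ hx0 m hm
    induction m, hm using Nat.le_induction with
    | base => simp
    | succ m hm ih =>
      have h1 : 1 ≤ m := le_trans hn₀ hm
      have hx := hrec m h1
      have hA1' := hA1 (m + 1) (by omega)
      have hA0' := hA0 (m + 1)
      have hsum : ∑ j ∈ Finset.Ioc n₀ (m + 1), A j
          = (∑ j ∈ Finset.Ioc n₀ m, A j) + A (m + 1) := by
        rw [← Finset.sum_Ioc_succ_top hm]
      have hS0 : 0 ≤ ∑ j ∈ Finset.Ioc n₀ m, A j := Finset.sum_nonneg fun j _ => hA0 j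
      have hyM := hy (m + 1)
      rw [hx, hsum]
      have hA1n : (0:ℝ) ≤ 1 - A (m + 1) := by linarith
      have e1 := mul_le_mul_of_nonneg_left ih hA1n
      have e2 := mul_le_mul_of_nonneg_left hyM hA0'
      have e3 : 0 ≤ x n₀ * (A (m+1) * (∑ j ∈ Finset.Ioc n₀ m, A j)) :=
        mul_nonneg hx0 (mul_nonneg hA0' hS0)
      have e4 : 0 ≤ M * (A (m+1) * (∑ j ∈ Finset.Ioc n₀ m, A j)) :=
        mul_nonneg hM (mul_nonneg hA0' hS0)
      nlinarith [e1, e2, e3, e4]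
  have lower : ∀ k n, (k + 1) ^ 2 ≤ n → n ≤ (k + 2) ^ 2 →
      -(|x ((k + 1) ^ 2)| + M * δ k) ≤ x n := by
    intro k n hn1 hn2
    have key : ∀ m, (k + 1) ^ 2 ≤ m → m ≤ (k + 2) ^ 2 →
        -(|x ((k + 1) ^ 2)| + M * ∑ j ∈ Finset.Ioc ((k + 1) ^ 2) m, A j) ≤ x m := by
      intro m hm
      induction m, hm using Nat.le_induction with
      | base =>
        intro _
        simp only [Finset.Ioc_self, Finset.sum_empty, mul_zero, add_zero]
        exact neg_abs_le _
      | succ m hm ih =>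
        intro hm2
        have ihm := ih (by omega)
        have h1 : 1 ≤ m := le_trans (hone k) hm
        have hx := hrec m h1
        have hA1' := hA1 (m + 1) (by omega)
        have hA0' := hA0 (m + 1)
        have hsum : ∑ j ∈ Finset.Ioc ((k + 1) ^ 2) (m + 1), A j
            = (∑ j ∈ Finset.Ioc ((k + 1) ^ 2) m, A j) + A (m + 1) := by
          rw [← Finset.sum_Ioc_succ_top hm]
        have hS0 : 0 ≤ ∑ j ∈ Finset.Ioc ((k + 1) ^ 2) m, A j :=
          Finset.sum_nonneg fun j _ => hA0 j
        have hyM := hy (m + 1)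
        rw [hx, hsum]
        have hA1n : (0:ℝ) ≤ 1 - A (m + 1) := by linarith
        have hLnn : 0 ≤ |x ((k + 1) ^ 2)| + M * ∑ j ∈ Finset.Ioc ((k + 1) ^ 2) m, A j := by
          have := abs_nonneg (x ((k + 1) ^ 2)); nlinarith
        have e1 := mul_le_mul_of_nonneg_left ihm hA1n
        have e2 := mul_le_mul_of_nonneg_left hyM hA0'
        have e3 := mul_nonneg hA0' hLnn
        nlinarith [e1, e2, e3]
    have hmono : M * ∑ j ∈ Finset.Ioc ((k + 1) ^ 2) n, A j ≤ M * δ k := by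
      apply mul_le_mul_of_nonneg_left _ hM
      apply Finset.sum_le_sum_of_subset_of_nonneg
      · exact Finset.Ioc_subset_Ioc le_rfl hn2
      · intro j _ _; exact hA0 j
    have := key n hn1 hn2
    linarith
  have upper : ∀ k n, (k + 1) ^ 2 ≤ n → n ≤ (k + 2) ^ 2 → δ k ≤ 1 / 2 →
      x n ≤ 2 * |x ((k + 2) ^ 2)| + 2 * M * δ k := by
    intro k n hn1 hn2 hδhalf
    rcases le_or_gt (x n) 0 with h | h
    · have h0 : 0 ≤ 2 * |x ((k + 2) ^ 2)| + 2 * M * δ k := by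
        have := hδ0 k; have := abs_nonneg (x ((k + 2) ^ 2)); nlinarith
      linarith
    · have h1n : 1 ≤ n := le_trans (hone k) hn1
      have hS : ∑ j ∈ Finset.Ioc n ((k + 2) ^ 2), A j ≤ δ k := by
        apply Finset.sum_le_sum_of_subset_of_nonneg
        · exact Finset.Ioc_subset_Ioc hn1 le_rfl
        · intro j _ _; exact hA0 j
      have hS0 : 0 ≤ ∑ j ∈ Finset.Ioc n ((k + 2) ^ 2), A j :=
        Finset.sum_nonneg fun j _ => hA0 j
      have hf := fwd n h1n h.le ((k + 2) ^ 2) hn2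
      have hxe : x ((k + 2) ^ 2) ≥ x n * (1 - δ k) - M * δ k := by
        have : x n * (1 - ∑ j ∈ Finset.Ioc n ((k + 2) ^ 2), A j) ≥ x n * (1 - δ k) := by
          apply mul_le_mul_of_nonneg_left _ h.le
          linarith
        have hMS : M * (∑ j ∈ Finset.Ioc n ((k + 2) ^ 2), A j) ≤ M * δ k :=
          mul_le_mul_of_nonneg_left hS hM
        linarith
      have habs : x ((k + 2) ^ 2) ≤ |x ((k + 2) ^ 2)| := le_abs_self _
      nlinarith
  rw [Metric.tendsto_atTop]
  intro ε hε
  have hb : Tendsto (fun k => |x ((k + 1) ^ 2)| + 2 * |x ((k + 2) ^ 2)| + 3 * M * δ k)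
      atTop (𝓝 0) := by
    have h1 : Tendsto (fun k => |x ((k + 1) ^ 2)|) atTop (𝓝 0) := by
      simpa using hsub.abs
    have h2 : Tendsto (fun k => |x ((k + 2) ^ 2)|) atTop (𝓝 0) := by
      have := h1.comp (tendsto_add_atTop_nat 1)
      simpa [Function.comp_def] using this
    have := ((h1.add ((h2.const_mul 2))).add ((hδ.const_mul (3 * M))))
    simpa using this
  have hev1 : ∀ᶠ k in atTop,
      |x ((k + 1) ^ 2)| + 2 * |x ((k + 2) ^ 2)| + 3 * M * δ k < ε :=
    hb.eventually_lt_const hε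
  have hev2 : ∀ᶠ k in atTop, δ k ≤ 1 / 2 := hδ.eventually_le_const (by norm_num)
  obtain ⟨K, hK⟩ := eventually_atTop.mp (hev1.and hev2)
  refine ⟨(K + 1) ^ 2, fun n hn => ?_⟩
  set s := Nat.sqrt n with hs
  have hs1 : K + 1 ≤ s := Nat.le_sqrt.mpr (by nlinarith)
  set k := s - 1 with hk
  have hks : k + 1 = s := by omega
  have hkK : K ≤ k := by omega
  have hn1 : (k + 1) ^ 2 ≤ n := by rw [hks]; simpa [pow_two] using Nat.sqrt_le' n
  have hn2 : n ≤ (k + 2) ^ 2 := by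
    have h2 : k + 2 = s + 1 := by omega
    rw [h2]
    have := Nat.lt_succ_sqrt' n
    simpa [pow_two] using this.le
  obtain ⟨hbK, hδK⟩ := hK k hkK
  have hl := lower k n hn1 hn2
  have hu := upper k n hn1 hn2 hδK
  rw [Real.dist_0_eq_abs, abs_lt]
  constructor
  · have := abs_nonneg (x ((k + 2) ^ 2)); have := hδ0 k; nlinarith
  · have := abs_nonneg (x ((k + 1) ^ 2)); have := hδ0 k; nlinarith

end Det

theorem stmt_13 {Γ : Type*} [MeasurableSpace Γ] (π : Measure Γ) [IsProbabilityMeasure π]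
    (θ : Γ → Γ) (hθ : MeasurePreserving θ π π)
    (g : Γ → ℝ) (hg : MemLp g 2 π)
    (c : ℝ) (hgc : ∀ ω, c ≤ g ω)
    (ρ : ℕ → ℝ)
    (hρ : ∀ m : ℕ, ρ m = (∫ ω, g ω * g (θ^[m] ω) ∂π) - (∫ ω, g ω ∂π) ^ 2)
    (hρsum : Summable fun m => |ρ m|)
    (p : ℝ) (hp0 : 1 / 2 < p) (hp1 : p ≤ 1)
    (τhat : Γ → ℕ → ℝ)
    (hinit : ∀ ω₀, τhat ω₀ 1 = g ω₀)
    (hrec : ∀ ω₀, ∀ n : ℕ, 1 ≤ n →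
      τhat ω₀ (n + 1) =
        (1 - ((n : ℝ) + 1) ^ (-p)) * τhat ω₀ n + ((n : ℝ) + 1) ^ (-p) * g (θ^[n] ω₀)) :
    ∀ᵐ ω₀ ∂π, Tendsto (fun n => τhat ω₀ n) atTop (𝓝 (∫ ω, g ω ∂π)) := by
  have hp0' : 0 < p := by linarith
  set μ := ∫ ω, g ω ∂π with hμ
  set α : ℕ → ℝ := fun n => (n : ℝ) ^ (-p) with hα
  have hα0 : ∀ n, 0 ≤ α n := fun n => Real.rpow_nonneg (Nat.cast_nonneg n) _
  have hα1 : ∀ n, 1 ≤ n → α n ≤ 1 := fun n hn =>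
    Real.rpow_le_one_of_one_le_of_nonpos (by exact_mod_cast hn) (by linarith)
  have hα1eq : α 1 = 1 := by simp [hα]
  have hαmono : ∀ m n : ℕ, 1 ≤ m → m ≤ n → α n ≤ α m := fun m n hm hmn =>
    Real.rpow_le_rpow_of_nonpos (by exact_mod_cast hm) (by exact_mod_cast hmn) (by linarith)
  -- the weights
  set W : ℕ → ℕ → ℝ := fun n k => α k * ∏ j ∈ Finset.Ioc k n, (1 - α j) with hWdef
  have hW0 : ∀ n k, 1 ≤ k → 0 ≤ W n k := by
    intro n k hk
    apply mul_nonneg (hα0 k)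
    apply Finset.prod_nonneg
    intro j hj
    rw [Finset.mem_Ioc] at hj
    have := hα1 j (by omega)
    linarith
  have hWsucc : ∀ n k, k ≤ n → W (n + 1) k = W n k * (1 - α (n + 1)) := by
    intro n k hk
    simp only [hWdef]
    rw [Finset.prod_Ioc_succ_top hk, mul_assoc]
  have hWn : ∀ n, W n n = α n := by intro n; simp [hWdef]
  have hWsum : ∀ n, 1 ≤ n → ∑ k ∈ Finset.Icc 1 n, W n k = 1 := by
    intro n hn
    induction n, hn using Nat.le_induction with
    | base => simp [hWn, hα1eq]
    | succ n hn ih =>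
      rw [Finset.sum_Icc_succ_top (by omega : 1 ≤ n + 1)]
      have : ∀ k ∈ Finset.Icc 1 n, W (n + 1) k = W n k * (1 - α (n + 1)) := by
        intro k hk
        rw [Finset.mem_Icc] at hk
        exact hWsucc n k hk.2
      rw [Finset.sum_congr rfl this, ← Finset.sum_mul, ih, hWn]
      ring
  -- W n k ≤ α n
  have hstep : ∀ n k, 1 ≤ k → k < n → W n k ≤ W n (k + 1) := by
    intro n k hk hkn
    have hsplit : Finset.Ioc k n = insert (k + 1) (Finset.Ioc (k + 1) n) := by
      ext j
      simp only [Finset.mem_Ioc, Finset.mem_insert]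
      omega
    have hnot : (k + 1) ∉ Finset.Ioc (k + 1) n := by simp
    have hprod0 : 0 ≤ ∏ j ∈ Finset.Ioc (k + 1) n, (1 - α j) := by
      apply Finset.prod_nonneg
      intro j hj
      rw [Finset.mem_Ioc] at hj
      have := hα1 j (by omega)
      linarith
    have hkey : α k * (1 - α (k + 1)) ≤ α (k + 1) := by
      set a : ℝ := (k:ℝ) ^ p with ha
      set b : ℝ := ((k:ℝ) + 1) ^ p with hb
      have hkp : (0:ℝ) < a := Real.rpow_pos_of_pos (by exact_mod_cast hk) _
      have hk1p : (0:ℝ) < b := Real.rpow_pos_of_pos (by positivity) _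
      have hab : b ≤ a + 1 := by
        have h := NNReal.coe_le_coe.2 (NNReal.rpow_add_le_add_rpow (k : NNReal) 1
          (le_of_lt hp0') hp1)
        push_cast at h
        simpa [ha, hb] using h
      have hαk : α k = a⁻¹ := by
        simp only [hα, ha]
        rw [Real.rpow_neg (Nat.cast_nonneg k)]
      have hαk1 : α (k + 1) = b⁻¹ := by
        simp only [hα, hb]
        push_cast
        rw [Real.rpow_neg (by positivity)]
      rw [hαk, hαk1]
      have h1 : (1:ℝ) ≤ (a + 1) * b⁻¹ := by
        have h := mul_le_mul_of_nonneg_right hab (inv_nonneg.mpr hk1p.le)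
        rwa [mul_inv_cancel₀ hk1p.ne'] at h
      have expand : (a + 1) * b⁻¹ = a * b⁻¹ + b⁻¹ := by ring
      have h4 : 1 - b⁻¹ ≤ a * b⁻¹ := by linarith
      have h5 := mul_le_mul_of_nonneg_left h4 (inv_nonneg.mpr hkp.le)
      rwa [← mul_assoc, inv_mul_cancel₀ hkp.ne', one_mul] at h5
    calc W n k = (α k * (1 - α (k + 1))) * ∏ j ∈ Finset.Ioc (k + 1) n, (1 - α j) := by
          simp only [hWdef]
          rw [hsplit, Finset.prod_insert hnot]
          ring
      _ ≤ α (k + 1) * ∏ j ∈ Finset.Ioc (k + 1) n, (1 - α j) :=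
          mul_le_mul_of_nonneg_right hkey hprod0
      _ = W n (k + 1) := rfl
  have hWle : ∀ n k, 1 ≤ k → k ≤ n → W n k ≤ α n := by
    intro n k hk hkn
    have key : ∀ d k, 1 ≤ k → k + d = n → W n k ≤ W n n := by
      intro d
      induction d with
      | zero => intro k hk hkn; rw [show k = n from by omega]
      | succ d ih =>
        intro k hk hkn
        calc W n k ≤ W n (k + 1) := hstep n k hk (by omega)
          _ ≤ W n n := ih (k + 1) (by omega) (by omega)
    rw [← hWn n]
    exact key (n - k) k hk (by omega)
  -- observations
  set X : ℕ → Γ → ℝ := fun k ω => g (θ^[k - 1] ω) with hXdef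
  have hmapa : ∀ a : ℕ, Measure.map (θ^[a]) π = π := fun a => (hθ.iterate a).map_eq
  have hGmem : ∀ a : ℕ, MemLp (fun ω => g (θ^[a] ω)) 2 π := fun a =>
    hg.comp_measurePreserving (hθ.iterate a)
  have hXmem : ∀ k : ℕ, MemLp (X k) 2 π := fun k => hGmem (k - 1)
  have hint_comp : ∀ (a : ℕ) (f : Γ → ℝ), AEStronglyMeasurable f π →
      ∫ ω, f (θ^[a] ω) ∂π = ∫ ω, f ω ∂π := by
    intro a f hf
    conv_rhs => rw [← hmapa a]
    rw [integral_map (hθ.iterate a).measurable.aemeasurable (by rwa [hmapa a])]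
  have hGint : ∀ a : ℕ, ∫ ω, g (θ^[a] ω) ∂π = μ := fun a => hint_comp a g hg.1
  have hmul : ∀ f h : Γ → ℝ, MemLp f 2 π → MemLp h 2 π →
      Integrable (fun ω => f ω * h ω) π := by
    intro f h hf hh
    have hc : (1 : ENNReal) / 1 = 1 / 2 + 1 / 2 := by
      simp only [one_div, inv_one]
      exact ENNReal.inv_two_add_inv_two.symm
    have := hh.smul hf (r := 1) (hpqr := ⟨by rw [inv_one]; exact ENNReal.inv_two_add_inv_two⟩)
    rw [memLp_one_iff_integrable] at this
    exact this
  have hprod : ∀ a b : ℕ, ∫ ω, g (θ^[a] ω) * g (θ^[a + b] ω) ∂π = ρ b + μ ^ 2 := by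
    intro a b
    have h1 : ∀ ω, g (θ^[a] ω) * g (θ^[a + b] ω) = (fun x => g x * g (θ^[b] x)) (θ^[a] ω) := by
      intro ω
      simp only []
      rw [Nat.add_comm a b, Function.iterate_add_apply]
    calc ∫ ω, g (θ^[a] ω) * g (θ^[a + b] ω) ∂π
        = ∫ ω, (fun x => g x * g (θ^[b] x)) (θ^[a] ω) ∂π := by
          exact integral_congr_ae (Filter.Eventually.of_forall h1)
      _ = ∫ x, g x * g (θ^[b] x) ∂π := hint_comp a _ (hg.1.mul (hGmem b).1)
      _ = ρ b + μ ^ 2 := by rw [hρ b]; ring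
  have hXint : ∀ k : ℕ, ∫ ω, X k ω ∂π = μ := fun k => hGint (k - 1)
  -- covariance
  have hcov_le : ∀ i j : ℕ, 1 ≤ i → i ≤ j →
      ∫ ω, (X i ω - μ) * (X j ω - μ) ∂π = ρ (j - i) := by
    intro i j hi hij
    have e1 : ∫ ω, X i ω * X j ω ∂π = ρ (j - i) + μ ^ 2 := by
      have h : (i - 1) + (j - i) = j - 1 := by omega
      have := hprod (i - 1) (j - i)
      rw [h] at this
      exact this
    have Ii : Integrable (X i) π := (hXmem i).integrable one_le_two
    have Ij : Integrable (X j) π := (hXmem j).integrable one_le_two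
    have Iij : Integrable (fun ω => X i ω * X j ω) π := hmul _ _ (hXmem i) (hXmem j)
    have hfe : ∀ ω, (X i ω - μ) * (X j ω - μ)
        = X i ω * X j ω - μ * X i ω - μ * X j ω + μ ^ 2 := by intro ω; ring
    have I1 : Integrable (fun ω => μ * X i ω) π := Ii.const_mul μ
    have I1' : Integrable (fun ω => μ * X j ω) π := Ij.const_mul μ
    have I2 : Integrable (fun ω => X i ω * X j ω - μ * X i ω) π := Iij.sub I1
    have I3 : Integrable (fun ω => X i ω * X j ω - μ * X i ω - μ * X j ω) π := I2.sub I1'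
    rw [integral_congr_ae (Filter.Eventually.of_forall hfe)]
    rw [integral_add I3 (integrable_const _)]
    rw [integral_sub I2 I1']
    rw [integral_sub Iij I1]
    rw [MeasureTheory.integral_const_mul, MeasureTheory.integral_const_mul, hXint i, hXint j, e1, integral_const]
    simp [measure_univ]
    ring
  have hcov : ∀ i j : ℕ, 1 ≤ i → 1 ≤ j →
      ∫ ω, (X i ω - μ) * (X j ω - μ) ∂π = ρ (Nat.dist i j) := by
    intro i j hi hj
    rcases le_total i j with h | h
    · rw [hcov_le i j hi h, Nat.dist_eq_sub_of_le h]
    · rw [integral_congr_ae (Filter.Eventually.of_forall (fun ω => mul_comm _ _)),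
        hcov_le j i hj h, Nat.dist_eq_sub_of_le_right h]
  -- closed form
  have hclosed : ∀ ω n, 1 ≤ n → τhat ω n = ∑ k ∈ Finset.Icc 1 n, W n k * X k ω := by
    intro ω n hn
    induction n, hn using Nat.le_induction with
    | base => simp [hWn, hα1eq, hXdef, hinit ω]
    | succ n hn ih =>
      have hcast : ((n : ℝ) + 1) ^ (-p) = α (n + 1) := by
        simp only [hα]; push_cast; ring_nf
      rw [hrec ω n hn, hcast, ih]
      rw [Finset.sum_Icc_succ_top (by omega : 1 ≤ n + 1)]
      have hWW : ∀ k ∈ Finset.Icc 1 n, W (n + 1) k * X k ω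
          = (1 - α (n + 1)) * (W n k * X k ω) := by
        intro k hk
        rw [Finset.mem_Icc] at hk
        rw [hWsucc n k hk.2]
        ring
      rw [Finset.sum_congr rfl hWW, ← Finset.mul_sum, hWn]
      have hXn1 : X (n + 1) ω = g (θ^[n] ω) := by simp [hXdef]
      rw [hXn1]
  have hcentered : ∀ ω n, 1 ≤ n →
      τhat ω n - μ = ∑ k ∈ Finset.Icc 1 n, W n k * (X k ω - μ) := by
    intro ω n hn
    rw [hclosed ω n hn]
    have : ∑ k ∈ Finset.Icc 1 n, W n k * (X k ω - μ)
        = ∑ k ∈ Finset.Icc 1 n, (W n k * X k ω - W n k * μ) := by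
      apply Finset.sum_congr rfl; intro k _; ring
    rw [this, Finset.sum_sub_distrib, ← Finset.sum_mul, hWsum n hn]
    ring
  -- variance bound
  set R : ℝ := ∑' m, |ρ m| with hRdef
  have hR0 : 0 ≤ R := tsum_nonneg fun m => abs_nonneg _
  have hdistsum : ∀ n i, 1 ≤ i → i ≤ n →
      ∑ j ∈ Finset.Icc 1 n, |ρ (Nat.dist i j)| ≤ 2 * R := by
    intro n i hi hin
    have hIcc : Finset.Icc 1 n = Finset.Ioc 0 n := Finset.Icc_add_one_left_eq_Ioc 0 n
    rw [hIcc, ← Finset.sum_Ioc_consecutive _ (Nat.zero_le i) hin]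
    have h1 : ∑ j ∈ Finset.Ioc 0 i, |ρ (Nat.dist i j)| ≤ R := by
      have hinj : ∀ x ∈ Finset.Ioc 0 i, ∀ y ∈ Finset.Ioc 0 i,
          Nat.dist i x = Nat.dist i y → x = y := by
        intro x hx y hy hxy
        simp only [Finset.mem_Ioc] at hx hy
        simp only [Nat.dist] at hxy
        omega
      rw [← Finset.sum_image (g := fun j => Nat.dist i j) (f := fun m => |ρ m|) hinj]
      exact Summable.sum_le_tsum _ (fun m _ => abs_nonneg _) hρsum
    have h2 : ∑ j ∈ Finset.Ioc i n, |ρ (Nat.dist i j)| ≤ R := by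
      have hinj : ∀ x ∈ Finset.Ioc i n, ∀ y ∈ Finset.Ioc i n,
          Nat.dist i x = Nat.dist i y → x = y := by
        intro x hx y hy hxy
        simp only [Finset.mem_Ioc] at hx hy
        simp only [Nat.dist] at hxy
        omega
      rw [← Finset.sum_image (g := fun j => Nat.dist i j) (f := fun m => |ρ m|) hinj]
      exact Summable.sum_le_tsum _ (fun m _ => abs_nonneg _) hρsum
    linarith
  have hvar : ∀ n, 1 ≤ n → ∫ ω, (τhat ω n - μ) ^ 2 ∂π ≤ 2 * R * α n := by
    intro n hn
    have hintij : ∀ i j : ℕ, Integrable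
        (fun ω => (W n i * W n j) * ((X i ω - μ) * (X j ω - μ))) π := by
      intro i j
      have hXc : ∀ k : ℕ, MemLp (fun ω => X k ω - μ) 2 π := fun k =>
        (hXmem k).sub (memLp_const μ)
      exact (hmul _ _ (hXc i) (hXc j)).const_mul _
    have hexp : ∫ ω, (τhat ω n - μ) ^ 2 ∂π
        = ∑ i ∈ Finset.Icc 1 n, ∑ j ∈ Finset.Icc 1 n,
            (W n i * W n j) * ρ (Nat.dist i j) := by
      have h1 : ∀ ω, (τhat ω n - μ) ^ 2 = ∑ i ∈ Finset.Icc 1 n, ∑ j ∈ Finset.Icc 1 n,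
          (W n i * W n j) * ((X i ω - μ) * (X j ω - μ)) := by
        intro ω
        rw [hcentered ω n hn, sq, Finset.sum_mul_sum]
        refine Finset.sum_congr rfl fun i _ => Finset.sum_congr rfl fun j _ => by ring
      rw [integral_congr_ae (Filter.Eventually.of_forall h1)]
      rw [integral_finset_sum _ (fun i _ => integrable_finset_sum _ (fun j _ => hintij i j))]
      refine Finset.sum_congr rfl fun i hi => ?_
      rw [integral_finset_sum _ (fun j _ => hintij i j)]
      refine Finset.sum_congr rfl fun j hj => ?_
      rw [Finset.mem_Icc] at hi hj
      rw [MeasureTheory.integral_const_mul, hcov i j hi.1 hj.1]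
    rw [hexp]
    have hinner : ∀ i ∈ Finset.Icc 1 n,
        ∑ j ∈ Finset.Icc 1 n, (W n i * W n j) * ρ (Nat.dist i j)
          ≤ W n i * (α n * (2 * R)) := by
      intro i hi
      rw [Finset.mem_Icc] at hi
      have step1 : ∀ j ∈ Finset.Icc 1 n, (W n i * W n j) * ρ (Nat.dist i j)
          ≤ W n i * (α n * |ρ (Nat.dist i j)|) := by
        intro j hj
        rw [Finset.mem_Icc] at hj
        have hWi := hW0 n i hi.1
        have hWj := hW0 n j hj.1
        have hWja := hWle n j hj.1 hj.2
        have h1 : (W n i * W n j) * ρ (Nat.dist i j) ≤ (W n i * W n j) * |ρ (Nat.dist i j)| :=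
          mul_le_mul_of_nonneg_left (le_abs_self _) (mul_nonneg hWi hWj)
        have h2 : (W n i * W n j) * |ρ (Nat.dist i j)| ≤ W n i * (α n * |ρ (Nat.dist i j)|) := by
          rw [mul_assoc]
          exact mul_le_mul_of_nonneg_left
            (mul_le_mul_of_nonneg_right hWja (abs_nonneg _)) hWi
        linarith
      calc ∑ j ∈ Finset.Icc 1 n, (W n i * W n j) * ρ (Nat.dist i j)
          ≤ ∑ j ∈ Finset.Icc 1 n, W n i * (α n * |ρ (Nat.dist i j)|) :=
            Finset.sum_le_sum step1
        _ = W n i * (α n * ∑ j ∈ Finset.Icc 1 n, |ρ (Nat.dist i j)|) := by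
            rw [← Finset.mul_sum, ← Finset.mul_sum]
        _ ≤ W n i * (α n * (2 * R)) := by
            apply mul_le_mul_of_nonneg_left _ (hW0 n i hi.1)
            exact mul_le_mul_of_nonneg_left (hdistsum n i hi.1 hi.2) (hα0 n)
    calc ∑ i ∈ Finset.Icc 1 n, ∑ j ∈ Finset.Icc 1 n, (W n i * W n j) * ρ (Nat.dist i j)
        ≤ ∑ i ∈ Finset.Icc 1 n, W n i * (α n * (2 * R)) := Finset.sum_le_sum hinner
      _ = (∑ i ∈ Finset.Icc 1 n, W n i) * (α n * (2 * R)) := (Finset.sum_mul _ _ _).symm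
      _ = 2 * R * α n := by rw [hWsum n hn]; ring
  -- summability along squares
  have hαsq : ∀ k : ℕ, α ((k + 1) ^ 2) = ((k : ℝ) + 1) ^ (-(2 * p)) := by
    intro k
    simp only [hα]
    have h1 : (((k + 1) ^ 2 : ℕ) : ℝ) = ((k : ℝ) + 1) ^ (2 : ℕ) := by push_cast; ring
    rw [h1, ← Real.rpow_natCast ((k : ℝ) + 1) 2, ← Real.rpow_mul (by positivity)]
    norm_num
  have hsummable : Summable (fun k : ℕ => 2 * R * α ((k + 1) ^ 2)) := by
    have hbase : Summable (fun n : ℕ => (n : ℝ) ^ (-(2 * p))) :=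
      Real.summable_nat_rpow.mpr (by linarith)
    have h1 : Summable (fun k : ℕ => ((k : ℝ) + 1) ^ (-(2 * p))) := by
      have := (summable_nat_add_iff 1).mpr hbase
      refine this.congr fun k => ?_
      push_cast
      ring_nf
    exact (h1.mul_left (2 * R)).congr fun k => by rw [hαsq k]
  -- Borel-Cantelli along squares
  have hEmem : ∀ n, 1 ≤ n → MemLp (fun ω => τhat ω n - μ) 2 π := by
    intro n hn
    have hfe : (fun ω => τhat ω n - μ)
        = fun ω => (∑ k ∈ Finset.Icc 1 n, W n k * X k ω) - μ := by
      funext ω; rw [hclosed ω n hn]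
    rw [hfe]
    exact (memLp_finset_sum _ fun k _ => (hXmem k).const_mul _).sub (memLp_const μ)
  have honesq : ∀ k : ℕ, 1 ≤ (k + 1) ^ 2 := fun k => Nat.one_le_pow _ _ (by omega)
  set E : ℕ → Γ → ℝ := fun k ω => τhat ω ((k + 1) ^ 2) - μ with hEdef
  have hEk : ∀ k, MemLp (E k) 2 π := fun k => hEmem _ (honesq k)
  set F : ℕ → Γ → ENNReal := fun k ω => ENNReal.ofReal (E k ω ^ 2) with hFdef
  have hFmeas : ∀ k, AEMeasurable (F k) π := fun k =>
    ((hEk k).aestronglyMeasurable.aemeasurable.pow_const 2).ennreal_ofReal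
  have hFlint : ∀ k, ∫⁻ ω, F k ω ∂π = ENNReal.ofReal (∫ ω, E k ω ^ 2 ∂π) := fun k =>
    (ofReal_integral_eq_lintegral_ofReal (hEk k).integrable_sq
      (Filter.Eventually.of_forall fun ω => sq_nonneg _)).symm
  have htsum_lt : ∑' k, ∫⁻ ω, F k ω ∂π < ⊤ := by
    have hle : ∀ k, ∫⁻ ω, F k ω ∂π ≤ ENNReal.ofReal (2 * R * α ((k + 1) ^ 2)) := by
      intro k
      rw [hFlint k]
      exact ENNReal.ofReal_le_ofReal (hvar _ (honesq k))
    calc ∑' k, ∫⁻ ω, F k ω ∂π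
        ≤ ∑' k, ENNReal.ofReal (2 * R * α ((k + 1) ^ 2)) := ENNReal.tsum_le_tsum hle
      _ = ENNReal.ofReal (∑' k, 2 * R * α ((k + 1) ^ 2)) :=
          (ENNReal.ofReal_tsum_of_nonneg
            (fun k => mul_nonneg (by positivity) (hα0 _)) hsummable).symm
      _ < ⊤ := ENNReal.ofReal_lt_top
  have hae : ∀ᵐ ω ∂π, Tendsto (fun k => E k ω) atTop (𝓝 0) := by
    have hl : ∫⁻ ω, ∑' k, F k ω ∂π ≠ ⊤ := by
      rw [lintegral_tsum hFmeas]; exact htsum_lt.ne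
    filter_upwards [ae_lt_top' (AEMeasurable.ennreal_tsum hFmeas) hl] with ω hω
    have hsummO : Summable (fun k => E k ω ^ 2) := by
      have h3 := ENNReal.summable_toReal hω.ne
      have h4 : (fun k => (F k ω).toReal) = fun k => E k ω ^ 2 := by
        funext k; simp [hFdef, ENNReal.toReal_ofReal (sq_nonneg _)]
      rwa [h4] at h3
    have h5 := hsummO.tendsto_atTop_zero.sqrt
    rw [Real.sqrt_zero] at h5
    rw [tendsto_zero_iff_abs_tendsto_zero]
    have h6 : (fun k => Real.sqrt (E k ω ^ 2)) = fun k => |E k ω| := by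
      funext k; exact Real.sqrt_sq_eq_abs _
    rw [h6] at h5
    exact h5
  -- assembly
  filter_upwards [hae] with ω hω
  set M : ℝ := max (μ - c) 0 with hMdef
  have hM0 : 0 ≤ M := le_max_right _ _
  have hy : ∀ n : ℕ, -M ≤ X n ω - μ := by
    intro n
    have h1 : c ≤ X n ω := hgc _
    have h2 : μ - c ≤ M := le_max_left _ _
    linarith
  have hxrec : ∀ n, 1 ≤ n → τhat ω (n + 1) - μ
      = (1 - α (n + 1)) * (τhat ω n - μ) + α (n + 1) * (X (n + 1) ω - μ) := by
    intro n hn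
    have hcast : ((n : ℝ) + 1) ^ (-p) = α (n + 1) := by
      simp only [hα]; push_cast; ring_nf
    have hXn : X (n + 1) ω = g (θ^[n] ω) := by simp [hXdef]
    rw [hrec ω n hn, hcast, hXn]
    ring
  have hδtend : Tendsto (fun k => ∑ j ∈ Finset.Ioc ((k + 1) ^ 2) ((k + 2) ^ 2), α j)
      atTop (𝓝 0) := by
    have hub : ∀ k : ℕ, ∑ j ∈ Finset.Ioc ((k + 1) ^ 2) ((k + 2) ^ 2), α j
        ≤ 3 * ((k : ℝ) + 1) ^ (1 - 2 * p) := by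
      intro k
      have h1 : ∀ j ∈ Finset.Ioc ((k + 1) ^ 2) ((k + 2) ^ 2), α j ≤ α ((k + 1) ^ 2) := by
        intro j hj
        rw [Finset.mem_Ioc] at hj
        exact hαmono _ _ (honesq k) hj.1.le
      have h2 := Finset.sum_le_card_nsmul _ _ _ h1
      rw [Nat.card_Ioc, nsmul_eq_mul] at h2
      have hcard : (k + 2) ^ 2 - (k + 1) ^ 2 = 2 * k + 3 := by
        have : (k + 2) ^ 2 = (k + 1) ^ 2 + (2 * k + 3) := by ring
        omega
      rw [hcard] at h2
      have h3 : ((2 * k + 3 : ℕ) : ℝ) * α ((k + 1) ^ 2)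
          ≤ (3 * ((k : ℝ) + 1)) * (((k : ℝ) + 1) ^ (-(2 * p))) := by
        rw [hαsq k]
        apply mul_le_mul_of_nonneg_right _ (Real.rpow_nonneg (by positivity) _)
        push_cast; linarith
      have h4 : (3 * ((k : ℝ) + 1)) * (((k : ℝ) + 1) ^ (-(2 * p)))
          = 3 * ((k : ℝ) + 1) ^ (1 - 2 * p) := by
        have h5 : ((k : ℝ) + 1) * ((k : ℝ) + 1) ^ (-(2 * p))
            = ((k : ℝ) + 1) ^ (1 - 2 * p) := by
          rw [show (1 - 2 * p) = 1 + -(2 * p) by ring, Real.rpow_add (by positivity),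
            Real.rpow_one]
        rw [mul_assoc, h5]
      linarith
    have hlb : ∀ k : ℕ, 0 ≤ ∑ j ∈ Finset.Ioc ((k + 1) ^ 2) ((k + 2) ^ 2), α j :=
      fun k => Finset.sum_nonneg fun j _ => hα0 j
    have hto : Tendsto (fun k : ℕ => 3 * ((k : ℝ) + 1) ^ (1 - 2 * p)) atTop (𝓝 0) := by
      have h5 : Tendsto (fun x : ℝ => x ^ (-(2 * p - 1))) atTop (𝓝 0) :=
        tendsto_rpow_neg_atTop (by linarith)
      have h6 : Tendsto (fun k : ℕ => (k : ℝ) + 1) atTop atTop :=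
        tendsto_atTop_add_const_right _ _ tendsto_natCast_atTop_atTop
      have h7 := h5.comp h6
      have h8 : (fun k : ℕ => ((k : ℝ) + 1) ^ (1 - 2 * p))
          = (fun x : ℝ => x ^ (-(2 * p - 1))) ∘ (fun k : ℕ => (k : ℝ) + 1) := by
        funext k
        simp only [Function.comp]
        norm_num
      have h9 : Tendsto (fun k : ℕ => ((k : ℝ) + 1) ^ (1 - 2 * p)) atTop (𝓝 0) := by
        rw [h8]; exact h7
      have := h9.const_mul 3
      simpa using this
    exact tendsto_of_tendsto_of_tendsto_of_le_of_le tendsto_const_nhds hto hlb hub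
  have hdet := det_lemma' α hα0 hα1 (fun n => τhat ω n - μ) (fun n => X n ω - μ)
    M hM0 hy hxrec hω hδtend
  have hfin := hdet.add_const μ
  simpa using hfin
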